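/- Let m be a positive integer and let A = (a_0, …, a_i) be a finite sequence of positive integers with i ≥ 1. If A is an m-palindrome, then m·[a_i, …, a_1] = [a_0, …, a_{i−1}]. -/

import Mathlib

/-- Value of a finite continued fraction `[a₀, a₁, …, a_i] = a₀ + 1/(a₁ + 1/(⋯ + 1/a_i))`. -/
noncomputable def cfVal : List ℕ → ℝ
  | [] => 0
  | [a] => (a : ℝ)
  | a :: b :: rest => (a : ℝ) + 1 / cfVal (b :: rest)

/-- `A` is an `m`-palindrome: `[A] = m·[Ã]`, where `Ã` is the reversal of `A`. -/
def IsMPal (m : ℕ) (A : List ℕ) : Prop := cfVal A = (m : ℝ) * cfVal A.reverse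

/-- The prefix `(a₀, …, a_i)` of an infinite sequence of partial quotients. -/
def cfPrefix (a : ℕ → ℕ) (i : ℕ) : List ℕ := (List.range (i + 1)).map a

/-- Continuant numerators, index-shifted: `contP a (k+1) = p_k`, `contP a 0 = p₋₁ = 1`. -/
def contP (a : ℕ → ℕ) : ℕ → ℤ
  | 0 => 1
  | 1 => (a 0 : ℤ)
  | (k+2) => (a (k+1) : ℤ) * contP a (k+1) + contP a k

/-- Continuant denominators, index-shifted: `contQ a (k+1) = q_k`, `contQ a 0 = q₋₁ = 0`. -/
def contQ (a : ℕ → ℕ) : ℕ → ℤ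
  | 0 => 0
  | 1 => 1
  | (k+2) => (a (k+1) : ℤ) * contQ a (k+1) + contQ a k

/-- Concatenation of `k` copies of the finite sequence `A`. -/
def listPow (A : List ℕ) (k : ℕ) : List ℕ := (List.replicate k A).flatten

/-- `x` is a quadratic irrational. -/
def IsQuadraticIrrational (x : ℝ) : Prop :=
  Irrational x ∧ ∃ a b c : ℤ, a ≠ 0 ∧ (a : ℝ) * x ^ 2 + (b : ℝ) * x + (c : ℝ) = 0

/-- `x` is a reduced quadratic irrational: `x > 1` and its algebraic (Galois) conjugate
lies strictly between `-1` and `0`. -/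
def IsReducedQuadIrr (x : ℝ) : Prop :=
  Irrational x ∧ 1 < x ∧
    ∃ a b c : ℤ, a ≠ 0 ∧ (a : ℝ) * x ^ 2 + (b : ℝ) * x + (c : ℝ) = 0 ∧
      ∀ y : ℝ, y ≠ x → (a : ℝ) * y ^ 2 + (b : ℝ) * y + (c : ℝ) = 0 → -1 < y ∧ y < 0

/-- `x` and `y` are equivalent: `x = (a + b·y)/(c + d·y)` for integers with `ad - bc = ±1`. -/
def RealEquiv (x y : ℝ) : Prop :=
  ∃ a b c d : ℤ, (a * d - b * c = 1 ∨ a * d - b * c = -1) ∧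
    ((c : ℝ) + (d : ℝ) * y ≠ 0) ∧ x = ((a : ℝ) + (b : ℝ) * y) / ((c : ℝ) + (d : ℝ) * y)


def contK : List ℕ → ℤ
  | [] => 1
  | [a] => (a : ℤ)
  | a :: b :: rest => (a : ℤ) * contK (b :: rest) + contK rest

lemma contK_pos : ∀ L : List ℕ, (∀ x ∈ L, 0 < x) → 0 < contK L := by
  intro L
  induction L using contK.induct with
  | case1 => intro _; simp [contK]
  | case2 a => intro h; simpa [contK] using h a (by simp)
  | case3 a b rest ih1 ih2 =>
    intro h
    have h1 : 0 < contK (b :: rest) := ih1 fun x hx => h x (by simp [hx])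
    have h2 : 0 < contK rest := ih2 fun x hx => h x (by simp [hx])
    have ha : (1 : ℤ) ≤ (a : ℤ) := by exact_mod_cast h a (by simp)
    show 0 < (a : ℤ) * contK (b :: rest) + contK rest
    nlinarith

lemma contK_concat2 : ∀ (L : List ℕ) (x y : ℕ),
    contK (L ++ [x, y]) = (y : ℤ) * contK (L ++ [x]) + contK L := by
  intro L
  induction L using contK.induct with
  | case1 => intro x y; simp [contK]; ring
  | case2 a => intro x y; simp [contK]; ring
  | case3 a b rest ih1 ih2 =>
    intro x y
    have e1 : contK ((a :: b :: rest) ++ [x, y])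
        = (a : ℤ) * contK ((b :: rest) ++ [x, y]) + contK (rest ++ [x, y]) := by
      simp [contK]
    have e2 : contK ((a :: b :: rest) ++ [x])
        = (a : ℤ) * contK ((b :: rest) ++ [x]) + contK (rest ++ [x]) := by
      cases rest <;> simp [contK]
    rw [e1, ih1, ih2, e2, show contK (a :: b :: rest)
        = (a : ℤ) * contK (b :: rest) + contK rest from rfl]
    ring

lemma contK_reverse_aux : ∀ (n : ℕ) (L : List ℕ), L.length ≤ n →
    contK L.reverse = contK L := by
  intro n
  induction n with
  | zero => intro L hL; rw [List.length_eq_zero_iff.mp (Nat.le_zero.mp hL)]; rfl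
  | succ n ih =>
    intro L hL
    rcases List.eq_nil_or_concat L with rfl | ⟨N, b, rfl⟩
    · rfl
    rw [List.concat_eq_append] at *
    rcases List.eq_nil_or_concat N with rfl | ⟨P, c, rfl⟩
    · rfl
    rw [List.concat_eq_append] at *
    have hPc : (P ++ [c]).length ≤ n := by
      have := hL; simp at this ⊢; omega
    have hP : P.length ≤ n := by simp at hPc ⊢; omega
    have e : ((P ++ [c]) ++ [b]).reverse = b :: c :: P.reverse := by simp
    rw [e]
    have e2 : contK (b :: c :: P.reverse)
        = (b : ℤ) * contK (c :: P.reverse) + contK P.reverse := rfl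
    have e3 : (c :: P.reverse) = (P ++ [c]).reverse := by simp
    rw [e2, e3, ih _ hPc, ih _ hP, List.append_assoc]
    rw [show ([c] ++ [b] : List ℕ) = [c, b] from rfl, contK_concat2]

lemma contK_reverse (L : List ℕ) : contK L.reverse = contK L :=
  contK_reverse_aux L.length L le_rfl

lemma cfVal_eq : ∀ L : List ℕ, L ≠ [] → (∀ x ∈ L, 0 < x) →
    cfVal L = (contK L : ℝ) / (contK L.tail : ℝ) := by
  intro L
  induction L using contK.induct with
  | case1 => intro h; exact absurd rfl h
  | case2 a => intro _ _; simp [cfVal, contK]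
  | case3 a b rest ih1 ih2 =>
    intro _ hpos
    have hp1 : ∀ x ∈ b :: rest, 0 < x := fun x hx => hpos x (by simp [hx])
    have k1 : 0 < contK (b :: rest) := contK_pos _ hp1
    have k2 : 0 < contK rest := contK_pos _ fun x hx => hpos x (by simp [hx])
    have hne1 : ((contK (b :: rest) : ℝ)) ≠ 0 := by positivity
    have hne2 : ((contK rest : ℝ)) ≠ 0 := by positivity
    have : cfVal (a :: b :: rest) = (a : ℝ) + 1 / cfVal (b :: rest) := rfl
    rw [this, ih1 (by simp) hp1]
    have e : contK (a :: b :: rest) = (a : ℤ) * contK (b :: rest) + contK rest := rfl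
    rw [show (a :: b :: rest).tail = b :: rest from rfl, e]
    push_cast
    field_simp
    rfl

lemma tail_dropLast_comm (l : List ℕ) : l.tail.dropLast = l.dropLast.tail := by
  cases l with
  | nil => rfl
  | cons a M =>
    cases M with
    | nil => rfl
    | cons b R => rfl

theorem m_palindrome_interior_identity
    (m : ℕ) (hm : 0 < m) (a : ℕ → ℕ) (i : ℕ) (hi : 1 ≤ i)
    (ha : ∀ k, k ≤ i → 0 < a k) (h : IsMPal m (cfPrefix a i)) :
    (m : ℝ) * cfVal ((List.range i).map (fun k => a (i - k))) =
      cfVal ((List.range i).map a) := by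
  set A : List ℕ := cfPrefix a i with hA
  have hlenA : A.length = i + 1 := by simp [hA, cfPrefix]
  have hApos : ∀ x ∈ A, 0 < x := by
    intro x hx
    simp only [hA, cfPrefix, List.mem_map, List.mem_range] at hx
    obtain ⟨k, hk, rfl⟩ := hx
    exact ha k (by omega)
  have hAne : A ≠ [] := by intro hc; rw [hc] at hlenA; simp at hlenA
  have htail : A.tail = (List.range i).map (fun k => a (k + 1)) := by
    simp [hA, cfPrefix, List.range_succ_eq_map, List.map_map, Function.comp]
  have hdrop : A.dropLast = (List.range i).map a := by
    simp [hA, cfPrefix, List.range_succ]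
  have hL1 : (List.range i).map (fun k => a (i - k)) = A.tail.reverse := by
    rw [htail]
    apply List.ext_getElem (by simp)
    intro j h1 h2
    simp only [List.getElem_reverse, List.getElem_map, List.getElem_range,
      List.length_map, List.length_range] at h1 h2 ⊢
    congr 1
    omega
  -- positivity of sub lists
  have hTpos : ∀ x ∈ A.tail, 0 < x := fun x hx => hApos x (List.mem_of_mem_tail hx)
  have hDpos : ∀ x ∈ A.dropLast, 0 < x := fun x hx =>
    hApos x (List.dropLast_sublist A |>.subset hx)
  have hTDpos : ∀ x ∈ A.tail.dropLast, 0 < x := fun x hx =>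
    hTpos x (List.dropLast_sublist A.tail |>.subset hx)
  have kA : 0 < contK A := contK_pos _ hApos
  have kT : 0 < contK A.tail := contK_pos _ hTpos
  have kD : 0 < contK A.dropLast := contK_pos _ hDpos
  have kTD : 0 < contK A.tail.dropLast := contK_pos _ hTDpos
  have kAne : ((contK A : ℝ)) ≠ 0 := by positivity
  have kTne : ((contK A.tail : ℝ)) ≠ 0 := by positivity
  have kDne : ((contK A.dropLast : ℝ)) ≠ 0 := by positivity
  have kTDne : ((contK A.tail.dropLast : ℝ)) ≠ 0 := by positivity
  -- rewrite hypothesis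
  have hrevne : A.reverse ≠ [] := by simpa using hAne
  have hrevpos : ∀ x ∈ A.reverse, 0 < x := fun x hx => hApos x (by simpa using hx)
  have hval : cfVal A = (contK A : ℝ) / (contK A.tail : ℝ) := cfVal_eq A hAne hApos
  have hvalrev : cfVal A.reverse = (contK A : ℝ) / (contK A.dropLast : ℝ) := by
    rw [cfVal_eq A.reverse hrevne hrevpos, contK_reverse, List.tail_reverse, contK_reverse]
  have key : ((contK A.dropLast : ℝ)) = (m : ℝ) * (contK A.tail : ℝ) := by
    have h' := h
    unfold IsMPal at h'
    rw [hval, hvalrev] at h'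
    field_simp at h'
    rcases mul_left_cancel₀ kAne (by rw [h']; ring : (contK A : ℝ) * (contK A.dropLast : ℝ)
        = (contK A : ℝ) * ((m : ℝ) * (contK A.tail : ℝ))) with h''
    exact h''
  -- rewrite goal
  have hTne : A.tail ≠ [] := by
    intro hc
    have : A.tail.length = i := by simp [hlenA]
    rw [hc] at this; simp at this; omega
  have hTrevne : A.tail.reverse ≠ [] := by simpa using hTne
  have hDne : A.dropLast ≠ [] := by
    intro hc
    have : A.dropLast.length = i := by simp [hlenA]
    rw [hc] at this; simp at this; omega
  have g1 : cfVal A.tail.reverse = (contK A.tail : ℝ) / (contK A.tail.dropLast : ℝ) := by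
    rw [cfVal_eq A.tail.reverse hTrevne (fun x hx => hTpos x (by simpa using hx)),
      contK_reverse, List.tail_reverse, contK_reverse]
  have g2 : cfVal A.dropLast = (contK A.dropLast : ℝ) / (contK A.tail.dropLast : ℝ) := by
    rw [cfVal_eq A.dropLast hDne hDpos, tail_dropLast_comm]
  rw [hL1, ← hdrop, g1, g2, key]
  ring
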